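/- In the discrete lm-SCM for the motivating example (Figure 1c), under Positivity, the natural interventional mean in the context R = 1 is recovered by adjusting for (W, Y₀): for every a ∈ {0,1}, E[Y₁ᵃ | R = 1] = Σ_{w ∈ 𝒲} Σ_{y ∈ 𝒴₀} μ(W = w, Y₀ = y | R = 1) · Q₁(w, y, a), where Q₁(w, y, a) := E[Y₁ | W = w, Y₀ = y, A = a, R = 1]. -/

import Mathlib

open MeasureTheory ProbabilityTheory

/-- Conditional probability of `S` given the event `E`: `μ(S ∩ E) / μ(E)`. -/
noncomputable def cprob {Ω : Type*} [MeasurableSpace Ω] (μ : Measure Ω) (S E : Set Ω) : ENNReal :=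
  μ (S ∩ E) / μ E

/-- Conditional expectation of `X` given the event `E`: `μ(E)⁻¹ * ∫_E X dμ`. -/
noncomputable def cexp {Ω : Type*} [MeasurableSpace Ω] (μ : Measure Ω) (X : Ω → ℝ) (E : Set Ω) : ℝ :=
  ((μ E).toReal)⁻¹ * ∫ ω in E, X ω ∂μ

lemma aux_setIntegral_indep {Ω α γ : Type*} [MeasurableSpace Ω] [MeasurableSpace α]
    [MeasurableSpace γ] (μ : Measure Ω) [IsProbabilityMeasure μ] {V : Ω → α} {U : Ω → γ}
    (hV : Measurable V) (hU : Measurable U) (hInd : IndepFun V U μ)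
    {B : Set α} (hB : MeasurableSet B) {g : γ → ℝ} (hg : Measurable g) :
    ∫ ω in V ⁻¹' B, g (U ω) ∂μ = (μ (V ⁻¹' B)).toReal * ∫ ω, g (U ω) ∂μ := by
  have hX : Measurable fun ω => (V ⁻¹' B).indicator (fun _ => (1:ℝ)) ω :=
    measurable_const.indicator (hV hB)
  have h1 : IndepFun (fun ω => (V ⁻¹' B).indicator (fun _ => (1:ℝ)) ω) (fun ω => g (U ω)) μ := by
    have := hInd.comp (measurable_const.indicator hB : Measurable (B.indicator fun _ => (1:ℝ))) hg
    have heq : (B.indicator (fun _ => (1:ℝ))) ∘ V = fun ω => (V ⁻¹' B).indicator (fun _ => (1:ℝ)) ω := by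
      funext ω; by_cases h : V ω ∈ B <;> simp [h, Set.indicator_apply]
    rwa [heq] at this
  have h2 := h1.integral_mul_eq_mul_integral hX.aestronglyMeasurable (hg.comp hU).aestronglyMeasurable
  have h3 : (fun ω => (V ⁻¹' B).indicator (fun _ => (1:ℝ)) ω) * (fun ω => g (U ω))
      = (V ⁻¹' B).indicator (fun ω => g (U ω)) := by
    funext ω; by_cases h : ω ∈ V ⁻¹' B <;> simp [h, Set.indicator_apply]
  rw [h3] at h2
  rw [integral_indicator (hV hB)] at h2
  rw [h2]
  congr 1
  exact integral_indicator_one (hV hB)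

theorem lmSCM_natural_mean_context1
    {Ω 𝒲 𝒴₀ 𝒰₀ 𝒰R 𝒰A 𝒰Y : Type*}
    [MeasurableSpace Ω]
    [Fintype 𝒲] [Nonempty 𝒲] [MeasurableSpace 𝒲] [MeasurableSingletonClass 𝒲]
    [Fintype 𝒴₀] [Nonempty 𝒴₀] [MeasurableSpace 𝒴₀] [MeasurableSingletonClass 𝒴₀]
    [MeasurableSpace 𝒰₀] [MeasurableSpace 𝒰R] [MeasurableSpace 𝒰A] [MeasurableSpace 𝒰Y]
    (μ : Measure Ω) [IsProbabilityMeasure μ]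
    (W : Ω → 𝒲) (U₀ : Ω → 𝒰₀) (UR : Ω → 𝒰R) (UA : Ω → 𝒰A) (UY : Ω → 𝒰Y)
    (hW : Measurable W) (hU₀ : Measurable U₀) (hUR : Measurable UR)
    (hUA : Measurable UA) (hUY : Measurable UY)
    (hIndep : iIndep
      (![MeasurableSpace.comap W inferInstance, MeasurableSpace.comap U₀ inferInstance,
         MeasurableSpace.comap UR inferInstance, MeasurableSpace.comap UA inferInstance,
         MeasurableSpace.comap UY inferInstance] : Fin 5 → MeasurableSpace Ω) μ)
    (f₀ : 𝒲 × 𝒰₀ → 𝒴₀) (hf₀ : Measurable f₀)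
    (fR : 𝒲 × 𝒰R → Fin 2) (hfR : Measurable fR)
    (fA : 𝒲 × 𝒴₀ × 𝒰A → Fin 2) (hfA : Measurable fA)
    (gA : 𝒲 × 𝒰A → Fin 2) (hgA : Measurable gA)
    (fY : 𝒲 × 𝒴₀ × Fin 2 × 𝒰Y → ℝ) (hfY : Measurable fY)
    (gY : 𝒲 × Fin 2 × 𝒰Y → ℝ) (hgY : Measurable gY)
    (Y₀ : Ω → 𝒴₀) (R A : Ω → Fin 2) (Y₁ : Ω → ℝ)
    (hY₀ : ∀ ω, Y₀ ω = f₀ (W ω, U₀ ω))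
    (hR : ∀ ω, R ω = fR (W ω, UR ω))
    (hA : ∀ ω, A ω = if R ω = 1 then fA (W ω, Y₀ ω, UA ω) else gA (W ω, UA ω))
    (hY₁ : ∀ ω, Y₁ ω = if R ω = 1 then fY (W ω, Y₀ ω, A ω, UY ω) else gY (W ω, A ω, UY ω))
    (Ynat : Fin 2 → Ω → ℝ)
    (hYnat : ∀ (a : Fin 2) (ω : Ω),
      Ynat a ω = if R ω = 1 then fY (W ω, Y₀ ω, a, UY ω) else gY (W ω, a, UY ω))
    (Yful : Fin 2 → Ω → ℝ)
    (hYful : ∀ (a : Fin 2) (ω : Ω), Yful a ω = fY (W ω, Y₀ ω, a, UY ω))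
    (hIntY₁ : Integrable Y₁ μ)
    (hIntN0 : Integrable (Ynat 0) μ) (hIntN1 : Integrable (Ynat 1) μ)
    (hIntF0 : Integrable (Yful 0) μ) (hIntF1 : Integrable (Yful 1) μ)
    (hpos : ∀ (w : 𝒲) (y : 𝒴₀) (r a : Fin 2),
      0 < μ {ω | W ω = w ∧ Y₀ ω = y ∧ R ω = r ∧ A ω = a})
    (Q1 : 𝒲 → 𝒴₀ → Fin 2 → ℝ)
    (hQ1 : ∀ (w : 𝒲) (y : 𝒴₀) (a : Fin 2),
      Q1 w y a = cexp μ Y₁ {ω | W ω = w ∧ Y₀ ω = y ∧ A ω = a ∧ R ω = 1})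
    (Q0 : 𝒲 → Fin 2 → ℝ)
    (hQ0 : ∀ (w : 𝒲) (a : Fin 2), Q0 w a = cexp μ Y₁ {ω | W ω = w ∧ A ω = a ∧ R ω = 0})
    :
    ∀ a : Fin 2,
      cexp μ (Ynat a) {ω | R ω = 1}
        = ∑ w : 𝒲, ∑ y : 𝒴₀,
            (cprob μ {ω | W ω = w ∧ Y₀ ω = y} {ω | R ω = 1}).toReal * Q1 w y a := by
  classical
  -- the "observed" part of the system
  set V : Ω → 𝒲 × 𝒰₀ × 𝒰R × 𝒰A := fun ω => (W ω, U₀ ω, UR ω, UA ω) with hVdef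
  have hV : Measurable V := hW.prodMk (hU₀.prodMk (hUR.prodMk hUA))
  -- independence of V and UY
  set s : Fin 5 → MeasurableSpace Ω :=
    ![MeasurableSpace.comap W inferInstance, MeasurableSpace.comap U₀ inferInstance,
      MeasurableSpace.comap UR inferInstance, MeasurableSpace.comap UA inferInstance,
      MeasurableSpace.comap UY inferInstance] with hsdef
  have h_le : ∀ n, s n ≤ ‹MeasurableSpace Ω› := by
    intro n
    fin_cases n
    · exact hW.comap_le
    · exact hU₀.comap_le
    · exact hUR.comap_le
    · exact hUA.comap_le
    · exact hUY.comap_le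
  have hIndepM := indep_biSup_compl h_le hIndep (({4} : Set (Fin 5))ᶜ)
  have h4 : (⨆ n ∈ (({4} : Set (Fin 5))ᶜ)ᶜ, s n) = MeasurableSpace.comap UY inferInstance := by
    rw [compl_compl]
    simp [hsdef]
  rw [h4] at hIndepM
  have hIndF : IndepFun V UY μ := by
    rw [IndepFun_iff_Indep]
    refine indep_of_indep_of_le_left hIndepM ?_
    rw [← measurable_iff_comap_le]
    have hmem : ∀ i : Fin 5, i ≠ 4 → s i ≤ ⨆ n ∈ (({4} : Set (Fin 5))ᶜ), s n := by
      intro i hi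
      exact le_biSup s (by simpa using hi)
    have hWm : Measurable[⨆ n ∈ (({4} : Set (Fin 5))ᶜ), s n] W :=
      Measurable.of_comap_le (le_trans (le_of_eq rfl) (hmem 0 (by decide)))
    have hU₀m : Measurable[⨆ n ∈ (({4} : Set (Fin 5))ᶜ), s n] U₀ :=
      Measurable.of_comap_le (le_trans (le_of_eq rfl) (hmem 1 (by decide)))
    have hURm : Measurable[⨆ n ∈ (({4} : Set (Fin 5))ᶜ), s n] UR :=
      Measurable.of_comap_le (le_trans (le_of_eq rfl) (hmem 2 (by decide)))
    have hUAm : Measurable[⨆ n ∈ (({4} : Set (Fin 5))ᶜ), s n] UA :=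
      Measurable.of_comap_le (le_trans (le_of_eq rfl) (hmem 3 (by decide)))
    exact hWm.prodMk (hU₀m.prodMk (hURm.prodMk hUAm))
  -- basic measurability
  have hY₀m : Measurable Y₀ := by
    have : Y₀ = fun ω => f₀ (W ω, U₀ ω) := funext hY₀
    rw [this]; exact hf₀.comp (hW.prodMk hU₀)
  have hRm : Measurable R := by
    have : R = fun ω => fR (W ω, UR ω) := funext hR
    rw [this]; exact hfR.comp (hW.prodMk hUR)
  intro a
  have hInt : Integrable (Ynat a) μ := by
    have h2 : a = 0 ∨ a = 1 := by omega
    rcases h2 with h | h <;> rw [h] <;> assumption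
  -- target B-sets
  set BE : Set (𝒲 × 𝒰₀ × 𝒰R × 𝒰A) := {p | fR (p.1, p.2.2.1) = 1} with hBEdef
  have hBE : MeasurableSet BE := by
    have : BE = (fun p : 𝒲 × 𝒰₀ × 𝒰R × 𝒰A => fR (p.1, p.2.2.1)) ⁻¹' {1} := rfl
    rw [this]
    exact (hfR.comp (measurable_fst.prodMk (measurable_fst.comp (measurable_snd.comp
      measurable_snd)))) (measurableSet_singleton 1)
  set BWY : 𝒲 → 𝒴₀ → Set (𝒲 × 𝒰₀ × 𝒰R × 𝒰A) :=
    fun w y => {p | p.1 = w ∧ f₀ (p.1, p.2.1) = y} with hBWYdef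
  have hBWY : ∀ w y, MeasurableSet (BWY w y) := by
    intro w y
    refine MeasurableSet.inter ?_ ?_
    · exact measurable_fst (measurableSet_singleton w)
    · exact (hf₀.comp (measurable_fst.prodMk (measurable_fst.comp measurable_snd)))
        (measurableSet_singleton y)
  set BQ : 𝒲 → 𝒴₀ → Set (𝒲 × 𝒰₀ × 𝒰R × 𝒰A) :=
    fun w y => {p | p.1 = w ∧ f₀ (p.1, p.2.1) = y ∧ fA (p.1, f₀ (p.1, p.2.1), p.2.2.2) = a ∧
      fR (p.1, p.2.2.1) = 1} with hBQdef
  have hBQ : ∀ w y, MeasurableSet (BQ w y) := by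
    intro w y
    have hm1 : MeasurableSet {p : 𝒲 × 𝒰₀ × 𝒰R × 𝒰A | fA (p.1, f₀ (p.1, p.2.1), p.2.2.2) = a} :=
      (hfA.comp (measurable_fst.prodMk
        ((hf₀.comp (measurable_fst.prodMk (measurable_fst.comp measurable_snd))).prodMk
          (measurable_snd.comp (measurable_snd.comp measurable_snd)))))
        (measurableSet_singleton a)
    have hm2 : MeasurableSet {p : 𝒲 × 𝒰₀ × 𝒰R × 𝒰A | fR (p.1, p.2.2.1) = 1} :=
      (hfR.comp (measurable_fst.prodMk (measurable_fst.comp (measurable_snd.comp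
        measurable_snd)))) (measurableSet_singleton 1)
    have heq : BQ w y = BWY w y ∩ ({p : 𝒲 × 𝒰₀ × 𝒰R × 𝒰A | fA (p.1, f₀ (p.1, p.2.1), p.2.2.2) = a}
        ∩ {p : 𝒲 × 𝒰₀ × 𝒰R × 𝒰A | fR (p.1, p.2.2.1) = 1}) := by
      ext p; simp only [hBQdef, hBWYdef, Set.mem_inter_iff, Set.mem_setOf_eq]; tauto
    rw [heq]
    exact (hBWY w y).inter (hm1.inter hm2)
  -- set identifications
  have hEset : {ω | R ω = 1} = V ⁻¹' BE := by
    ext ω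
    simp only [Set.mem_setOf_eq, Set.mem_preimage, hBEdef, hVdef, hR ω]
  have hCellset : ∀ w y, {ω | W ω = w ∧ Y₀ ω = y} ∩ {ω | R ω = 1} = V ⁻¹' (BWY w y ∩ BE) := by
    intro w y
    ext ω
    simp only [Set.mem_inter_iff, Set.mem_setOf_eq, Set.mem_preimage, hBEdef, hBWYdef,
      hVdef, hR ω, hY₀ ω]
  have hQset : ∀ w y, {ω | W ω = w ∧ Y₀ ω = y ∧ A ω = a ∧ R ω = 1} = V ⁻¹' (BQ w y) := by
    intro w y
    ext ω
    simp only [Set.mem_setOf_eq, Set.mem_preimage, hBQdef, hVdef, ← hY₀ ω, ← hR ω]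
    constructor
    · rintro ⟨h1, h2, h3, h4⟩
      refine ⟨h1, h2, ?_, h4⟩
      rw [hA ω, if_pos h4] at h3
      exact h3
    · rintro ⟨h1, h2, h3, h4⟩
      refine ⟨h1, h2, ?_, h4⟩
      rw [hA ω, if_pos h4]
      exact h3
  -- the mean of fY (w, y, a, UY ·)
  set I : 𝒲 → 𝒴₀ → ℝ := fun w y => ∫ ω, fY (w, y, a, UY ω) ∂μ with hIdef
  have hgm : ∀ w y, Measurable (fun u : 𝒰Y => fY (w, y, a, u)) := fun w y =>
    hfY.comp (measurable_const.prodMk (measurable_const.prodMk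
      (measurable_const.prodMk measurable_id)))
  -- Q1 = I
  have hQ1I : ∀ w y, Q1 w y a = I w y := by
    intro w y
    have hcong : ∫ ω in V ⁻¹' (BQ w y), Y₁ ω ∂μ
        = ∫ ω in V ⁻¹' (BQ w y), fY (w, y, a, UY ω) ∂μ := by
      refine setIntegral_congr_fun (hV (hBQ w y)) ?_
      intro ω hω
      obtain ⟨h1, h2, h3, h4⟩ : W ω = w ∧ Y₀ ω = y ∧ A ω = a ∧ R ω = 1 := by
        have := (hQset w y).symm ▸ hω
        rw [← hQset w y] at hω
        exact hω
      simp only [hY₁ ω, if_pos h4, h1, h2, h3]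
    have hkey := aux_setIntegral_indep μ hV hUY hIndF (hBQ w y) (hgm w y)
    have hpos' : μ (V ⁻¹' (BQ w y)) ≠ 0 := by
      rw [← hQset w y]
      have h := hpos w y 1 a
      have hss : {ω | W ω = w ∧ Y₀ ω = y ∧ R ω = 1 ∧ A ω = a}
          = {ω | W ω = w ∧ Y₀ ω = y ∧ A ω = a ∧ R ω = 1} := by
        ext ω; simp only [Set.mem_setOf_eq]; tauto
      rw [hss] at h
      exact ne_of_gt h
    have hne : ((μ (V ⁻¹' (BQ w y))).toReal) ≠ 0 :=
      ENNReal.toReal_ne_zero.mpr ⟨hpos', measure_ne_top μ _⟩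
    rw [hQ1 w y a, cexp, hQset w y, hcong, hkey, ← mul_assoc, inv_mul_cancel₀ hne, one_mul]
  -- split the integral over {R = 1} into cells
  have hpt : ∀ ω, Ynat a ω
      = ∑ w : 𝒲, ∑ y : 𝒴₀, ({ω | W ω = w ∧ Y₀ ω = y}).indicator (Ynat a) ω := by
    intro ω
    have h1 : ∀ w : 𝒲, (∑ y : 𝒴₀, ({ω | W ω = w ∧ Y₀ ω = y}).indicator (Ynat a) ω)
        = if W ω = w then Ynat a ω else 0 := by
      intro w
      rw [Finset.sum_eq_single (Y₀ ω)]
      · by_cases h : W ω = w <;> simp [Set.indicator_apply, h]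
      · intro y _ hy
        exact Set.indicator_of_notMem (fun h => hy h.2.symm) _
      · intro h; exact absurd (Finset.mem_univ _) h
    simp only [h1]
    rw [Finset.sum_eq_single (W ω)]
    · simp
    · intro w _ hw
      exact if_neg (fun h => hw h.symm)
    · intro h; exact absurd (Finset.mem_univ _) h
  have hmeasWY : ∀ (w : 𝒲) (y : 𝒴₀), MeasurableSet {ω | W ω = w ∧ Y₀ ω = y} := by
    intro w y
    exact (hW (measurableSet_singleton w)).inter (hY₀m (measurableSet_singleton y))
  have hsplit : ∫ ω in {ω | R ω = 1}, Ynat a ω ∂μ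
      = ∑ w : 𝒲, ∑ y : 𝒴₀, ∫ ω in V ⁻¹' (BWY w y ∩ BE), Ynat a ω ∂μ := by
    calc ∫ ω in {ω | R ω = 1}, Ynat a ω ∂μ
        = ∫ ω in {ω | R ω = 1},
            (∑ w : 𝒲, ∑ y : 𝒴₀, ({ω | W ω = w ∧ Y₀ ω = y}).indicator (Ynat a) ω) ∂μ := by
          exact setIntegral_congr_fun (hRm (measurableSet_singleton 1)) (fun ω _ => hpt ω)
      _ = ∑ w : 𝒲, ∑ y : 𝒴₀,
            ∫ ω in {ω | R ω = 1}, ({ω | W ω = w ∧ Y₀ ω = y}).indicator (Ynat a) ω ∂μ := by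
          rw [integral_finset_sum]
          · refine Finset.sum_congr rfl (fun w _ => ?_)
            rw [integral_finset_sum]
            intro y _
            exact (hInt.integrableOn).indicator (hmeasWY w y)
          · intro w _
            refine integrable_finset_sum _ (fun y _ => ?_)
            exact (hInt.integrableOn).indicator (hmeasWY w y)
      _ = ∑ w : 𝒲, ∑ y : 𝒴₀, ∫ ω in V ⁻¹' (BWY w y ∩ BE), Ynat a ω ∂μ := by
          refine Finset.sum_congr rfl (fun w _ => Finset.sum_congr rfl (fun y _ => ?_))
          rw [setIntegral_indicator (hmeasWY w y), Set.inter_comm, hCellset w y]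
  -- evaluate each cell integral
  have hcellval : ∀ w y, ∫ ω in V ⁻¹' (BWY w y ∩ BE), Ynat a ω ∂μ
      = (μ (V ⁻¹' (BWY w y ∩ BE))).toReal * I w y := by
    intro w y
    have hcong : ∫ ω in V ⁻¹' (BWY w y ∩ BE), Ynat a ω ∂μ
        = ∫ ω in V ⁻¹' (BWY w y ∩ BE), fY (w, y, a, UY ω) ∂μ := by
      refine setIntegral_congr_fun (hV ((hBWY w y).inter hBE)) ?_
      intro ω hω
      rw [← hCellset w y] at hω
      obtain ⟨⟨h1, h2⟩, h4⟩ := hω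
      simp only [Set.mem_setOf_eq] at h1 h2 h4
      simp only [hYnat a ω, if_pos h4, h1, h2]
    rw [hcong, aux_setIntegral_indep μ hV hUY hIndF ((hBWY w y).inter hBE) (hgm w y)]
  -- put it together
  rw [cexp, hsplit, Finset.mul_sum]
  refine Finset.sum_congr rfl (fun w _ => ?_)
  rw [Finset.mul_sum]
  refine Finset.sum_congr rfl (fun y _ => ?_)
  rw [hcellval w y, hQ1I w y, cprob, hCellset w y, ENNReal.toReal_div]
  ring
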